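/- Let λ > 0, a₁ > 0, F : (0,∞) → ℝ continuous and bounded with F(x) ≤ F∞ for all x, and suppose a₁ g + F∞ ≤ 0 for a constant g. Let L v = (1/2)σ²x²v'' + b x v' with b < a₁. If G₀ is a twice continuously differentiable solution of -L G₀(x) + (a₁+λ) G₀(x) = a₁ g + F(x) on (0,∞) with at most linear growth, then G₀(x) ≤ 0 for all x ∈ (0,∞). -/

import Mathlib

open Set Filter Topology

lemma secondDeriv_nonpos_of_isLocalMax {f : ℝ → ℝ} {x : ℝ}
    (hf : ∀ᶠ y in 𝓝 x, DifferentiableAt ℝ f y)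
    (hd : DifferentiableAt ℝ (deriv f) x) (hmax : IsLocalMax f x) :
    deriv (deriv f) x ≤ 0 := by
  by_contra h
  push_neg at h
  have h0 : deriv f x = 0 := hmax.deriv_eq_zero
  have hslope : Tendsto (slope (deriv f) x) (𝓝[≠] x) (𝓝 (deriv (deriv f) x)) :=
    hasDerivAt_iff_tendsto_slope.mp hd.hasDerivAt
  have hpos : ∀ᶠ y in 𝓝[≠] x, 0 < slope (deriv f) x y :=
    hslope.eventually (eventually_gt_nhds h)
  rw [eventually_nhdsWithin_iff] at hpos
  have hall : ∀ᶠ y in 𝓝 x, DifferentiableAt ℝ f y ∧ f y ≤ f x ∧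
      (y ∈ ({x}ᶜ : Set ℝ) → 0 < slope (deriv f) x y) :=
    hf.and (hmax.and hpos)
  rw [Metric.eventually_nhds_iff] at hall
  obtain ⟨ε, hε, hP⟩ := hall
  set c := x + ε / 2 with hc
  have hxc : x < c := by simp [hc]; linarith
  have hmem : ∀ y ∈ Icc x c, dist y x < ε := by
    intro y hy
    rw [Real.dist_eq, abs_lt]
    have h2 := hy.2
    rw [hc] at h2
    constructor
    · linarith [hy.1]
    · linarith
  have hcont : ContinuousOn f (Icc x c) := fun y hy =>
    ((hP (hmem y hy)).1.continuousAt).continuousWithinAt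
  have hmono : StrictMonoOn f (Icc x c) := by
    apply strictMonoOn_of_deriv_pos (convex_Icc x c) hcont
    intro y hy
    rw [interior_Icc] at hy
    have hyx : y ≠ x := ne_of_gt hy.1
    have := (hP (hmem y ⟨le_of_lt hy.1, le_of_lt hy.2⟩)).2.2 hyx
    have hy' : 0 < (deriv f y - deriv f x) / (y - x) := by
      simpa [slope_def_field, div_eq_iff] using this
    rw [h0, sub_zero] at hy'
    have hyx0 : 0 < y - x := sub_pos.mpr hy.1
    have := mul_pos hy' hyx0
    rwa [div_mul_cancel₀ _ (ne_of_gt hyx0)] at this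
  have h1 : f x < f c := hmono (left_mem_Icc.mpr hxc.le) (right_mem_Icc.mpr hxc.le) hxc
  have h2 : f c ≤ f x := (hP (hmem c (right_mem_Icc.mpr hxc.le))).2.1
  linarith

lemma phi_hasDerivAt (ε p q y : ℝ) (hy : 0 < y) :
    HasDerivAt (fun t : ℝ => ε * (t ^ p + t ^ (-q)))
      (ε * (p * y ^ (p - 1) + -q * y ^ (-q - 1))) y := by
  have h1 := Real.hasDerivAt_rpow_const (x := y) (p := p) (Or.inl hy.ne')
  have h2 := Real.hasDerivAt_rpow_const (x := y) (p := -q) (Or.inl hy.ne')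
  exact (h1.add h2).const_mul ε

set_option maxHeartbeats 1000000 in
theorem penalized_ode_nonpositive
    (σ b a₁ lam : ℝ) (hσ : 0 < σ) (hba : b < a₁) (ha₁ : 0 < a₁) (hlam : 0 < lam)
    (F : ℝ → ℝ) (hFcont : ContinuousOn F (Ioi 0))
    (Finf : ℝ) (hFbdd : ∀ x ∈ Ioi (0 : ℝ), F x ≤ Finf)
    (g : ℝ) (hg : a₁ * g + Finf ≤ 0)
    (G₀ : ℝ → ℝ) (hG₀ : ContDiffOn ℝ 2 G₀ (Ioi 0))
    (hODE : ∀ x ∈ Ioi (0 : ℝ),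
      -((1 / 2) * σ ^ 2 * x ^ 2 * deriv (deriv G₀) x + b * x * deriv G₀ x)
        + (a₁ + lam) * G₀ x = a₁ * g + F x)
    (C : ℝ) (hgrowth : ∀ x ∈ Ioi (0 : ℝ), |G₀ x| ≤ C * (1 + x)) :
    ∀ x ∈ Ioi (0 : ℝ), G₀ x ≤ 0 := by
  intro x₀ hx₀
  by_contra hpos
  push_neg at hpos
  have hx₀' : 0 < x₀ := hx₀
  have hA : 0 < a₁ + lam - b := by linarith
  set M : ℝ := |b| + σ ^ 2 + 1 with hMdef
  have hM0 : 0 < M := by positivity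
  set δ : ℝ := min 1 ((a₁ + lam - b) / (2 * M)) with hδdef
  set q : ℝ := min 1 ((a₁ + lam) / (2 * M)) with hqdef
  have hδ0 : 0 < δ := lt_min one_pos (by positivity)
  have hq0 : 0 < q := lt_min one_pos (by positivity)
  have hδ1 : δ ≤ 1 := min_le_left _ _
  have hq1 : q ≤ 1 := min_le_left _ _
  have hδM : δ * (2 * M) ≤ a₁ + lam - b := by
    have h := min_le_right 1 ((a₁ + lam - b) / (2 * M))
    have h2 : δ * (2 * M) ≤ (a₁ + lam - b) / (2 * M) * (2 * M) :=
      mul_le_mul_of_nonneg_right h (by positivity)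
    rwa [div_mul_cancel₀ _ (by positivity : (2 * M : ℝ) ≠ 0)] at h2
  have hqM : q * (2 * M) ≤ a₁ + lam := by
    have h := min_le_right 1 ((a₁ + lam) / (2 * M))
    have h2 : q * (2 * M) ≤ (a₁ + lam) / (2 * M) * (2 * M) :=
      mul_le_mul_of_nonneg_right h (by positivity)
    rwa [div_mul_cancel₀ _ (by positivity : (2 * M : ℝ) ≠ 0)] at h2
  set p : ℝ := 1 + δ with hpdef
  set cp : ℝ := (a₁ + lam) - (1 / 2) * σ ^ 2 * p * (p - 1) - b * p with hcpdef
  set cq : ℝ := (a₁ + lam) - (1 / 2) * σ ^ 2 * q * (q + 1) + b * q with hcqdef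
  have hb1 : b ≤ |b| := le_abs_self b
  have hb2 : -|b| ≤ b := neg_abs_le b
  have hcp : 0 < cp := by
    rw [hcpdef, hpdef]
    nlinarith [hδ0, hδ1, hδM, sq_nonneg σ, mul_nonneg hδ0.le (sq_nonneg σ),
      mul_nonneg hδ0.le (abs_nonneg b)]
  have hcq : 0 < cq := by
    rw [hcqdef]
    nlinarith [hq0, hq1, hqM, sq_nonneg σ, mul_nonneg hq0.le (sq_nonneg σ),
      mul_nonneg hq0.le (abs_nonneg b)]
  have hC : 0 ≤ C := by
    have h1 := hgrowth 1 (by norm_num)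
    have h2 := abs_nonneg (G₀ 1)
    nlinarith
  have hφ₀ : 0 < x₀ ^ p + x₀ ^ (-q) :=
    add_pos (Real.rpow_pos_of_pos hx₀' _) (Real.rpow_pos_of_pos hx₀' _)
  set ε : ℝ := G₀ x₀ / (2 * (x₀ ^ p + x₀ ^ (-q))) with hεdef
  have hε0 : 0 < ε := div_pos hpos (by positivity)
  clear_value M δ q p cp cq ε
  set w : ℝ → ℝ := fun y => G₀ y - ε * (y ^ p + y ^ (-q)) with hwdef
  have hwx₀pos : 0 < w x₀ := by
    have hεφ : ε * (x₀ ^ p + x₀ ^ (-q)) = G₀ x₀ / 2 := by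
      rw [hεdef]
      field_simp
    simp only [hwdef, hεφ]
    linarith
  -- upper tail
  set B : ℝ := max 1 (((2 * C + 1) / ε) ^ (δ⁻¹)) with hBdef
  have hBtail : ∀ y, B ≤ y → w y < 0 := by
    intro y hy
    have hy1 : (1 : ℝ) ≤ y := le_trans (le_max_left _ _) hy
    have hy0 : (0 : ℝ) < y := by linarith
    have h1 : ((2 * C + 1) / ε) ^ (δ⁻¹) ≤ y := le_trans (le_max_right _ _) hy
    have h2 : (2 * C + 1) / ε ≤ y ^ δ := by
      calc (2 * C + 1) / ε = (((2 * C + 1) / ε) ^ (δ⁻¹)) ^ δ :=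
            (Real.rpow_inv_rpow (by positivity) (ne_of_gt hδ0)).symm
        _ ≤ y ^ δ := Real.rpow_le_rpow (by positivity) h1 hδ0.le
    have hεyδ : 2 * C + 1 ≤ ε * y ^ δ := by
      have h3 := mul_le_mul_of_nonneg_left h2 hε0.le
      rwa [mul_div_cancel₀ _ (ne_of_gt hε0)] at h3
    have hyp : y ^ p = y * y ^ δ := by
      rw [hpdef, Real.rpow_add hy0, Real.rpow_one]
    have hG : G₀ y ≤ C * (1 + y) := le_trans (le_abs_self _) (hgrowth y hy0)
    have hq' : 0 < y ^ (-q) := Real.rpow_pos_of_pos hy0 _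
    have h4 : (2 * C + 1) * y ≤ ε * y ^ p := by
      rw [hyp]
      calc (2 * C + 1) * y ≤ ε * y ^ δ * y := mul_le_mul_of_nonneg_right hεyδ hy0.le
        _ = ε * (y * y ^ δ) := by ring
    have h6 : 0 < ε * y ^ (-q) := mul_pos hε0 hq'
    have h7 : 0 ≤ C * (y - 1) := mul_nonneg hC (by linarith)
    simp only [hwdef]
    linarith
  -- lower tail
  set A : ℝ := min 1 ((ε / (2 * C + 1)) ^ (q⁻¹)) with hAdef
  have hA0 : 0 < A := lt_min one_pos (Real.rpow_pos_of_pos (by positivity) _)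
  have hAtail : ∀ y, 0 < y → y ≤ A → w y < 0 := by
    intro y hy0 hy
    have hy1 : y ≤ 1 := le_trans hy (min_le_left _ _)
    have h1 : y ≤ (ε / (2 * C + 1)) ^ (q⁻¹) := le_trans hy (min_le_right _ _)
    have h2 : y ^ q ≤ ε / (2 * C + 1) := by
      calc y ^ q ≤ ((ε / (2 * C + 1)) ^ (q⁻¹)) ^ q :=
            Real.rpow_le_rpow hy0.le h1 hq0.le
        _ = ε / (2 * C + 1) := Real.rpow_inv_rpow (by positivity) (ne_of_gt hq0)
    have hyq0 : 0 < y ^ q := Real.rpow_pos_of_pos hy0 _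
    have h3 : (ε / (2 * C + 1))⁻¹ ≤ (y ^ q)⁻¹ := inv_anti₀ hyq0 h2
    rw [inv_div] at h3
    have h4 : y ^ (-q) = (y ^ q)⁻¹ := Real.rpow_neg hy0.le q
    have h5 : 2 * C + 1 ≤ ε * y ^ (-q) := by
      rw [h4]
      have h6 := mul_le_mul_of_nonneg_left h3 hε0.le
      rw [← mul_div_assoc, mul_div_cancel_left₀ _ (ne_of_gt hε0)] at h6
      linarith
    have hG : G₀ y ≤ C * (1 + y) := le_trans (le_abs_self _) (hgrowth y hy0)
    have hyp0 : 0 < y ^ p := Real.rpow_pos_of_pos hy0 _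
    have h7 : 0 < ε * y ^ p := mul_pos hε0 hyp0
    have h8 : 0 ≤ C * (1 - y) := mul_nonneg hC (by linarith)
    simp only [hwdef]
    linarith
  -- x₀ lies strictly between A and B
  have hx₀A : A < x₀ := by
    by_contra h
    push_neg at h
    have := hAtail x₀ hx₀' h
    linarith
  have hx₀B : x₀ < B := by
    by_contra h
    push_neg at h
    have := hBtail x₀ h
    linarith
  -- maximum on [A, B]
  have hsub : Icc A B ⊆ Ioi (0 : ℝ) := fun y hy => lt_of_lt_of_le hA0 hy.1
  have hwcont : ContinuousOn w (Icc A B) := by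
    apply ContinuousOn.sub (hG₀.continuousOn.mono hsub)
    apply ContinuousOn.mul continuousOn_const
    apply ContinuousOn.add
    · intro y hy
      exact (Real.continuousAt_rpow_const y p (Or.inl (ne_of_gt (hsub hy)))).continuousWithinAt
    · intro y hy
      exact (Real.continuousAt_rpow_const y (-q) (Or.inl (ne_of_gt (hsub hy)))).continuousWithinAt
  obtain ⟨s, hsmem, hsmax⟩ :=
    isCompact_Icc.exists_isMaxOn ⟨x₀, ⟨hx₀A.le, hx₀B.le⟩⟩ hwcont
  have hws : w x₀ ≤ w s := hsmax ⟨hx₀A.le, hx₀B.le⟩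
  have hs0 : 0 < s := hsub hsmem
  have hsA : A < s := by
    rcases eq_or_lt_of_le hsmem.1 with h | h
    · exfalso
      have := hAtail s hs0 (le_of_eq h.symm)
      linarith
    · exact h
  have hsB : s < B := by
    rcases eq_or_lt_of_le hsmem.2 with h | h
    · exfalso
      have := hBtail s h.ge
      linarith
    · exact h
  have hloc : IsLocalMax w s :=
    hsmax.isLocalMax (mem_nhds_iff.mpr ⟨Ioo A B, Ioo_subset_Icc_self, isOpen_Ioo, ⟨hsA, hsB⟩⟩)
  -- derivative structure
  have hne : Ioi (0 : ℝ) ∈ 𝓝 s := isOpen_Ioi.mem_nhds hs0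
  have hG₀diff : ∀ y ∈ Ioi (0 : ℝ), DifferentiableAt ℝ G₀ y := fun y hy =>
    (hG₀.differentiableOn two_ne_zero).differentiableAt (isOpen_Ioi.mem_nhds hy)
  have hderiv1 : ∀ y ∈ Ioi (0 : ℝ),
      deriv w y = deriv G₀ y - ε * (p * y ^ (p - 1) + -q * y ^ (-q - 1)) := by
    intro y hy
    have hφ := phi_hasDerivAt ε p q y hy
    rw [hwdef]
    rw [deriv_fun_sub (hG₀diff y hy) hφ.differentiableAt, hφ.deriv]
  have hev : deriv w =ᶠ[𝓝 s]
      (fun y => deriv G₀ y - ε * (p * y ^ (p - 1) + -q * y ^ (-q - 1))) :=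
    eventually_of_mem hne hderiv1
  have hG'cd : ContDiffOn ℝ 1 (deriv G₀) (Ioi 0) :=
    hG₀.deriv_of_isOpen isOpen_Ioi (by norm_num)
  have hG'diff : DifferentiableAt ℝ (deriv G₀) s :=
    (hG'cd.differentiableOn one_ne_zero).differentiableAt hne
  have hψ : HasDerivAt (fun y : ℝ => ε * (p * y ^ (p - 1) + -q * y ^ (-q - 1)))
      (ε * (p * ((p - 1) * s ^ (p - 2)) + -q * ((-q - 1) * s ^ (-q - 2)))) s := by
    have h1 := (Real.hasDerivAt_rpow_const (x := s) (p := p - 1) (Or.inl hs0.ne')).const_mul p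
    have h2 := (Real.hasDerivAt_rpow_const (x := s) (p := -q - 1) (Or.inl hs0.ne')).const_mul (-q)
    rw [show p - 1 - 1 = p - 2 from by ring] at h1
    rw [show -q - 1 - 1 = -q - 2 from by ring] at h2
    exact (h1.add h2).const_mul ε
  have hd2 : deriv (deriv w) s
      = deriv (deriv G₀) s - ε * (p * ((p - 1) * s ^ (p - 2)) + -q * ((-q - 1) * s ^ (-q - 2))) := by
    rw [hev.deriv_eq, deriv_fun_sub hG'diff hψ.differentiableAt, hψ.deriv]
  have hd1 : deriv w s = 0 := hloc.deriv_eq_zero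
  have hwdiff : ∀ᶠ y in 𝓝 s, DifferentiableAt ℝ w y :=
    eventually_of_mem hne fun y hy =>
      (hG₀diff y hy).sub (phi_hasDerivAt ε p q y hy).differentiableAt
  have hwd2diff : DifferentiableAt ℝ (deriv w) s :=
    hev.differentiableAt_iff.mpr (hG'diff.sub hψ.differentiableAt)
  have hsec : deriv (deriv w) s ≤ 0 := secondDeriv_nonpos_of_isLocalMax hwdiff hwd2diff hloc
  -- express derivatives of G₀ at s
  have hG1s : deriv G₀ s = ε * (p * s ^ (p - 1) + -q * s ^ (-q - 1)) := by
    have h := hderiv1 s hs0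
    rw [hd1] at h
    linarith
  have hG2s : deriv (deriv G₀) s
      = deriv (deriv w) s + ε * (p * ((p - 1) * s ^ (p - 2)) + -q * ((-q - 1) * s ^ (-q - 2))) := by
    rw [hd2]; ring
  -- power identities
  have hP : 0 < s ^ p := Real.rpow_pos_of_pos hs0 _
  have hQ : 0 < s ^ (-q) := Real.rpow_pos_of_pos hs0 _
  have e1 : s ^ 2 * s ^ (p - 2) = s ^ p := by
    rw [← Real.rpow_natCast s 2, ← Real.rpow_add hs0]
    norm_num
  have e2 : s ^ 2 * s ^ (-q - 2) = s ^ (-q) := by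
    rw [← Real.rpow_natCast s 2, ← Real.rpow_add hs0]
    norm_num
  have e3 : s * s ^ (p - 1) = s ^ p := by
    nth_rewrite 1 [← Real.rpow_one s]
    rw [← Real.rpow_add hs0]
    norm_num
  have e4 : s * s ^ (-q - 1) = s ^ (-q) := by
    nth_rewrite 1 [← Real.rpow_one s]
    rw [← Real.rpow_add hs0]
    norm_num
  -- the key identity
  have hODEs := hODE s hs0
  rw [hG1s, hG2s] at hODEs
  have hwseq : w s = G₀ s - ε * (s ^ p + s ^ (-q)) := rfl
  have key : (a₁ + lam) * w s + ε * (cp * s ^ p + cq * s ^ (-q))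
      = (1 / 2) * σ ^ 2 * s ^ 2 * deriv (deriv w) s + (a₁ * g + F s) := by
    rw [hwseq, hcpdef, hcqdef]
    linear_combination hODEs + (1 / 2) * σ ^ 2 * ε * p * (p - 1) * e1
      + (1 / 2) * σ ^ 2 * ε * q * (q + 1) * e2 + ε * b * p * e3 - ε * b * q * e4
  -- contradiction
  have hFs : F s ≤ Finf := hFbdd s hs0
  have h1 : 0 < (a₁ + lam) * w s := mul_pos (by linarith) (by linarith)
  have h2 : 0 < ε * (cp * s ^ p + cq * s ^ (-q)) :=
    mul_pos hε0 (add_pos (mul_pos hcp hP) (mul_pos hcq hQ))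
  have h3 : (1 / 2) * σ ^ 2 * s ^ 2 * deriv (deriv w) s ≤ 0 :=
    mul_nonpos_of_nonneg_of_nonpos (by positivity) hsec
  clear_value w A B
  linarith [key, h1, h2, h3, hFs, hg]
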